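/- Let F be an infinite field and n ≥ 2. Let δ_n ∈ F^(n³) be the structure vector whose only nonzero entry is δ_{112} = 1 (the commutative algebra d_n with [v_1,v_1] = v_2 and all other basis products zero). Then the Zariski closure of the GL(n,F)-orbit of δ_n equals O(δ_n) ∪ {0}; i.e., the only proper degeneration of d_n is to the abelian algebra. -/

import Mathlib

open scoped BigOperators

/-- Change-of-basis action of `GL(n,F)` on structure vectors in `F^(n³)`. -/
def actSV {F : Type*} [Field F] {n : ℕ} (g : GL (Fin n) F)
    (lam : Fin n → Fin n → Fin n → F) : Fin n → Fin n → Fin n → F :=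
  fun a b c => ∑ i, ∑ j, ∑ k,
    (g : Matrix (Fin n) (Fin n) F) i a * (g : Matrix (Fin n) (Fin n) F) j b *
      ((g⁻¹ : GL (Fin n) F) : Matrix (Fin n) (Fin n) F) c k * lam i j k

/-- The `GL(n,F)`-orbit of a structure vector. -/
def orbitSV {F : Type*} [Field F] {n : ℕ} (lam : Fin n → Fin n → Fin n → F) :
    Set (Fin n → Fin n → Fin n → F) :=
  {mu | ∃ g : GL (Fin n) F, mu = actSV g lam}

/-- Zariski closure of a set of structure vectors: the common zero locus of all
polynomials vanishing on the set. -/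
def zClosure {F : Type*} [Field F] {n : ℕ} (S : Set (Fin n → Fin n → Fin n → F)) :
    Set (Fin n → Fin n → Fin n → F) :=
  {mu | ∀ p : MvPolynomial (Fin n × Fin n × Fin n) F,
      (∀ lam ∈ S, MvPolynomial.eval (fun t => lam t.1 t.2.1 t.2.2) p = 0) →
      MvPolynomial.eval (fun t => mu t.1 t.2.1 t.2.2) p = 0}

lemma actSV_delta {F : Type*} [Field F] {n : ℕ} (hn : 2 ≤ n)
    (delta : Fin n → Fin n → Fin n → F)
    (hdelta : ∀ i j k : Fin n,
      delta i j k =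
        if i = (⟨0, Nat.lt_of_lt_of_le Nat.zero_lt_two hn⟩ : Fin n) ∧ j = (⟨0, Nat.lt_of_lt_of_le Nat.zero_lt_two hn⟩ : Fin n) ∧
            k = (⟨1, Nat.lt_of_lt_of_le Nat.one_lt_two hn⟩ : Fin n) then 1 else 0)
    (g : GL (Fin n) F) (a b c : Fin n) :
    actSV g delta a b c =
      (g : Matrix (Fin n) (Fin n) F) ⟨0, Nat.lt_of_lt_of_le Nat.zero_lt_two hn⟩ a *
        (g : Matrix (Fin n) (Fin n) F) ⟨0, Nat.lt_of_lt_of_le Nat.zero_lt_two hn⟩ b *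
        ((g⁻¹ : GL (Fin n) F) : Matrix (Fin n) (Fin n) F) c ⟨1, Nat.lt_of_lt_of_le Nat.one_lt_two hn⟩ := by
  unfold actSV
  simp [hdelta, ite_and, mul_ite, Finset.sum_ite_eq, Finset.sum_ite_eq']

lemma tensor_mem_orbit {F : Type*} [Field F] {n : ℕ} (hn : 2 ≤ n)
    (delta : Fin n → Fin n → Fin n → F)
    (hdelta : ∀ i j k : Fin n,
      delta i j k =
        if i = (⟨0, Nat.lt_of_lt_of_le Nat.zero_lt_two hn⟩ : Fin n) ∧ j = (⟨0, Nat.lt_of_lt_of_le Nat.zero_lt_two hn⟩ : Fin n) ∧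
            k = (⟨1, Nat.lt_of_lt_of_le Nat.one_lt_two hn⟩ : Fin n) then 1 else 0)
    (u w : Fin n → F) (hu : u ≠ 0) (hw : w ≠ 0) (huw : ∑ k, u k * w k = 0) :
    (fun a b c => u a * u b * w c) ∈ orbitSV delta := by
  set z0 : Fin n := ⟨0, Nat.lt_of_lt_of_le Nat.zero_lt_two hn⟩ with hz0def
  set z1 : Fin n := ⟨1, Nat.lt_of_lt_of_le Nat.one_lt_two hn⟩ with hz1def
  have hz01 : z0 ≠ z1 := by simp [hz0def, hz1def, Fin.ext_iff]
  obtain ⟨q, hq⟩ : ∃ q, u q ≠ 0 := by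
    by_contra h; push_neg at h; exact hu (funext h)
  obtain ⟨r, hr, hrq⟩ : ∃ r, w r ≠ 0 ∧ r ≠ q := by
    by_contra h; push_neg at h
    have hwk : ∀ k, k ≠ q → w k = 0 := by
      intro k hk
      by_contra hwk
      exact hk (h k hwk)
    have hsum : ∑ k, u k * w k = u q * w q := by
      apply Finset.sum_eq_single
      · intro b _ hb; rw [hwk b hb]; ring
      · intro hb; exact absurd (Finset.mem_univ q) hb
    have hwq : w q = 0 := by
      have := hsum ▸ huw
      rcases mul_eq_zero.mp this with h' | h'
      · exact absurd h' hq
      · exact h'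
    apply hw
    funext k
    by_cases hk : k = q
    · rw [hk]; exact hwq
    · exact hwk k hk
  -- permutation τ with τ z0 = q, τ z1 = r
  set s : Fin n := Equiv.swap z0 q z1 with hsdef
  have hsq : s ≠ q := by
    intro h
    have : Equiv.swap z0 q s = Equiv.swap z0 q q := by rw [h]
    rw [hsdef, Equiv.swap_apply_self, Equiv.swap_apply_right] at this
    exact hz01 this.symm
  set τ : Equiv.Perm (Fin n) := (Equiv.swap z0 q).trans (Equiv.swap s r) with hτdef
  have hτ0 : τ z0 = q := by
    simp only [hτdef, Equiv.trans_apply, Equiv.swap_apply_left]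
    exact Equiv.swap_apply_of_ne_of_ne (Ne.symm hsq) (Ne.symm hrq)
  have hτ1 : τ z1 = r := by
    simp only [hτdef, Equiv.trans_apply, ← hsdef, Equiv.swap_apply_left]
  -- the matrix
  set M : Matrix (Fin n) (Fin n) F := fun i j =>
    if i = z0 then u j
    else if i = z1 then (if j = r then (w r)⁻¹ else 0)
    else (if j = τ i then 1 else 0) - w (τ i) * (w r)⁻¹ * (if j = r then 1 else 0)
    with hMdef
  have hM0 : ∀ j, M z0 j = u j := by intro j; simp [hMdef]
  have hM1 : ∀ j, M z1 j = if j = r then (w r)⁻¹ else 0 := by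
    intro j; simp [hMdef, Ne.symm hz01]
  have hM2 : ∀ i, i ≠ z0 → i ≠ z1 → ∀ j,
      M i j = (if j = τ i then 1 else 0) - w (τ i) * (w r)⁻¹ * (if j = r then 1 else 0) := by
    intro i h0 h1 j; simp [hMdef, h0, h1]
  have hτne_r : ∀ i, i ≠ z1 → τ i ≠ r := by
    intro i h1 h; exact h1 (τ.injective (h.trans hτ1.symm))
  have hτne_q : ∀ i, i ≠ z0 → τ i ≠ q := by
    intro i h0 h; exact h0 (τ.injective (h.trans hτ0.symm))
  have hMw : M.mulVec w = Pi.single z1 1 := by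
    funext i
    rw [Matrix.mulVec, dotProduct]
    by_cases hi0 : i = z0
    · subst hi0
      simp only [hM0]
      rw [huw, Pi.single_apply, if_neg hz01]
    · by_cases hi1 : i = z1
      · subst hi1
        simp only [hM1, ite_mul, zero_mul]
        rw [Finset.sum_ite_eq' Finset.univ r (fun j => (w r)⁻¹ * w j)]
        simp [inv_mul_cancel₀ hr]
      · simp only [hM2 i hi0 hi1, mul_ite, mul_one, mul_zero, sub_mul, ite_mul, zero_mul,
          one_mul, Finset.sum_sub_distrib]
        rw [Finset.sum_ite_eq' Finset.univ (τ i) w,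
          Finset.sum_ite_eq' Finset.univ r (fun j => w (τ i) * (w r)⁻¹ * w j)]
        rw [Pi.single_apply, if_neg hi1]
        simp only [Finset.mem_univ, if_pos]
        field_simp
        ring
  have key : ∀ v : Fin n → F, Matrix.vecMul v M = 0 → v = 0 := by
    intro v hv
    have hv' : ∀ j, ∑ i, v i * M i j = 0 := fun j => by
      simpa [Matrix.vecMul, dotProduct] using congrFun hv j
    have hvz1 : v z1 = 0 := by
      have e1 : ∑ j, (∑ i, v i * M i j) * w j = 0 := by
        simp [hv']
      have e2 : ∑ j, (∑ i, v i * M i j) * w j = ∑ i, v i * M.mulVec w i := by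
        simp only [Matrix.mulVec, dotProduct, Finset.sum_mul, Finset.mul_sum]
        rw [Finset.sum_comm]
        exact Finset.sum_congr rfl fun i _ => Finset.sum_congr rfl fun j _ => by ring
      have e3 : ∑ i, v i * M.mulVec w i = v z1 := by
        rw [hMw]
        simp [Pi.single_apply, mul_ite, mul_one, mul_zero, Finset.sum_ite_eq' Finset.univ z1 v]
      rw [e2, e3] at e1
      exact e1
    have hvz0 : v z0 = 0 := by
      have hq' : ∑ i, v i * M i q = v z0 * M z0 q := by
        apply Finset.sum_eq_single
        · intro b _ hb
          by_cases hb1 : b = z1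
          · subst hb1; rw [hvz1]; ring
          · rw [hM2 b hb hb1, if_neg (fun h => hτne_q b hb h.symm),
              if_neg (fun h => hrq h.symm)]
            ring
        · intro h; exact absurd (Finset.mem_univ z0) h
      rw [hv' q, hM0] at hq'
      rcases mul_eq_zero.mp hq'.symm with h | h
      · exact h
      · exact absurd h hq
    have hrest : ∀ i, i ≠ z0 → i ≠ z1 → v i = 0 := by
      intro i hi0 hi1
      have hq' : ∑ i', v i' * M i' (τ i) = v i * M i (τ i) := by
        apply Finset.sum_eq_single
        · intro b _ hb
          by_cases hb0 : b = z0
          · subst hb0; rw [hvz0]; ring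
          by_cases hb1 : b = z1
          · subst hb1; rw [hvz1]; ring
          · rw [hM2 b hb0 hb1, if_neg (fun h => hb (τ.injective h).symm),
              if_neg (fun h => hτne_r i hi1 h)]
            ring
        · intro h; exact absurd (Finset.mem_univ i) h
      rw [hv' (τ i), hM2 i hi0 hi1, if_pos rfl,
        if_neg (fun h => hτne_r i hi1 h)] at hq'
      simpa using hq'.symm
    funext i
    by_cases hi0 : i = z0
    · rw [hi0]; exact hvz0
    by_cases hi1 : i = z1
    · rw [hi1]; exact hvz1
    · exact hrest i hi0 hi1
  have hMunit : IsUnit M := by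
    rw [← Matrix.vecMul_injective_iff_isUnit]
    intro x y hxy
    have h0 : Matrix.vecMul (x - y) M = 0 := by
      rw [Matrix.sub_vecMul]
      rw [show M.vecMul x = M.vecMul y from hxy]
      simp
    exact sub_eq_zero.mp (key (x - y) h0)
  obtain ⟨G, hG⟩ := hMunit
  refine ⟨G, ?_⟩
  have hGM : ((G : GL (Fin n) F) : Matrix (Fin n) (Fin n) F) = M := hG
  have hGi : ∀ c, (((G : GL (Fin n) F)⁻¹ : GL (Fin n) F) : Matrix (Fin n) (Fin n) F) c z1 = w c := by
    have hinv : (((G : GL (Fin n) F)⁻¹ : GL (Fin n) F) : Matrix (Fin n) (Fin n) F) * M = 1 := by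
      rw [← hGM]
      exact (G : GL (Fin n) F).inv_mul
    intro c
    have h1 : ((((G : GL (Fin n) F)⁻¹ : GL (Fin n) F) : Matrix (Fin n) (Fin n) F) * M).mulVec w
        = w := by rw [hinv, Matrix.one_mulVec]
    rw [← Matrix.mulVec_mulVec, hMw] at h1
    have h2 := congrFun h1 c
    rw [Matrix.mulVec_single] at h2
    rw [← h2]
    simp
  funext a b c
  rw [actSV_delta hn delta hdelta]
  rw [hGM, hM0, hM0, hGi]

lemma orbit_tensor {F : Type*} [Field F] {n : ℕ} (hn : 2 ≤ n)
    (delta : Fin n → Fin n → Fin n → F)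
    (hdelta : ∀ i j k : Fin n,
      delta i j k =
        if i = (⟨0, Nat.lt_of_lt_of_le Nat.zero_lt_two hn⟩ : Fin n) ∧ j = (⟨0, Nat.lt_of_lt_of_le Nat.zero_lt_two hn⟩ : Fin n) ∧
            k = (⟨1, Nat.lt_of_lt_of_le Nat.one_lt_two hn⟩ : Fin n) then 1 else 0)
    (mu : Fin n → Fin n → Fin n → F) (hmu : mu ∈ orbitSV delta) :
    ∃ u w : Fin n → F, (∑ k, u k * w k = 0) ∧
      ∀ a b c, mu a b c = u a * u b * w c := by
  obtain ⟨g, rfl⟩ := hmu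
  refine ⟨fun a => (g : Matrix (Fin n) (Fin n) F) ⟨0, Nat.lt_of_lt_of_le Nat.zero_lt_two hn⟩ a,
    fun c => ((g⁻¹ : GL (Fin n) F) : Matrix (Fin n) (Fin n) F) c ⟨1, Nat.lt_of_lt_of_le Nat.one_lt_two hn⟩, ?_, ?_⟩
  · have h : ((g : Matrix (Fin n) (Fin n) F) *
        ((g⁻¹ : GL (Fin n) F) : Matrix (Fin n) (Fin n) F)) = 1 := g.mul_inv
    have h2 := congrFun (congrFun h (⟨0, Nat.lt_of_lt_of_le Nat.zero_lt_two hn⟩ : Fin n)) (⟨1, Nat.lt_of_lt_of_le Nat.one_lt_two hn⟩ : Fin n)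
    rw [Matrix.mul_apply] at h2
    rw [h2, Matrix.one_apply_ne]
    simp [Fin.ext_iff]
  · intro a b c
    exact actSV_delta hn delta hdelta g a b c

lemma scalar_mem_orbit {F : Type*} [Field F] {n : ℕ} (hn : 2 ≤ n)
    (delta : Fin n → Fin n → Fin n → F)
    (hdelta : ∀ i j k : Fin n,
      delta i j k =
        if i = (⟨0, Nat.lt_of_lt_of_le Nat.zero_lt_two hn⟩ : Fin n) ∧ j = (⟨0, Nat.lt_of_lt_of_le Nat.zero_lt_two hn⟩ : Fin n) ∧
            k = (⟨1, Nat.lt_of_lt_of_le Nat.one_lt_two hn⟩ : Fin n) then 1 else 0)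
    (t : F) (ht : t ≠ 0) :
    (fun a b c => delta a b c * t) ∈ orbitSV delta := by
  set z0 : Fin n := ⟨0, Nat.lt_of_lt_of_le Nat.zero_lt_two hn⟩ with hz0def
  set z1 : Fin n := ⟨1, Nat.lt_of_lt_of_le Nat.one_lt_two hn⟩ with hz1def
  have hz01 : z0 ≠ z1 := by simp [hz0def, hz1def, Fin.ext_iff]
  set u : Fin n → F := fun a => if a = z0 then 1 else 0 with hudef
  set w : Fin n → F := fun c => if c = z1 then t else 0 with hwdef
  have h1 : (fun a b c => delta a b c * t) = fun a b c => u a * u b * w c := by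
    funext a b c
    by_cases ha : a = z0 <;> by_cases hb : b = z0 <;> by_cases hc : c = z1 <;>
      simp [hdelta, hudef, hwdef, ha, hb, hc]
  rw [h1]
  apply tensor_mem_orbit hn delta hdelta
  · intro h
    have := congrFun h z0
    simp [hudef] at this
  · intro h
    have := congrFun h z1
    simp [hwdef] at this
    exact ht this
  · apply Finset.sum_eq_zero
    intro k _
    by_cases hk : k = z0
    · simp [hudef, hwdef, hk, hz01, Ne.symm hz01]
    · simp [hudef, hk]

lemma zero_eval {F : Type*} [Field F] [Infinite F] {n : ℕ} (hn : 2 ≤ n)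
    (delta : Fin n → Fin n → Fin n → F)
    (hdelta : ∀ i j k : Fin n,
      delta i j k =
        if i = (⟨0, Nat.lt_of_lt_of_le Nat.zero_lt_two hn⟩ : Fin n) ∧ j = (⟨0, Nat.lt_of_lt_of_le Nat.zero_lt_two hn⟩ : Fin n) ∧
            k = (⟨1, Nat.lt_of_lt_of_le Nat.one_lt_two hn⟩ : Fin n) then 1 else 0)
    (p : MvPolynomial (Fin n × Fin n × Fin n) F)
    (hp : ∀ lam ∈ orbitSV delta, MvPolynomial.eval (fun t => lam t.1 t.2.1 t.2.2) p = 0) :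
    MvPolynomial.eval (fun _ : Fin n × Fin n × Fin n => (0 : F)) p = 0 := by
  set q : Polynomial F := MvPolynomial.eval₂ Polynomial.C
    (fun idx => Polynomial.C (delta idx.1 idx.2.1 idx.2.2) * Polynomial.X) p with hqdef
  have heval : ∀ t : F, q.eval t =
      MvPolynomial.eval (fun idx : Fin n × Fin n × Fin n => delta idx.1 idx.2.1 idx.2.2 * t) p := by
    intro t
    have h := MvPolynomial.eval₂_comp_left (Polynomial.evalRingHom t) Polynomial.C
      (fun idx : Fin n × Fin n × Fin n =>
        Polynomial.C (delta idx.1 idx.2.1 idx.2.2) * Polynomial.X) p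
    have h1 : (Polynomial.evalRingHom t).comp Polynomial.C = RingHom.id F := by
      ext x; simp
    have h2 : (⇑(Polynomial.evalRingHom t)) ∘ (fun idx : Fin n × Fin n × Fin n =>
        Polynomial.C (delta idx.1 idx.2.1 idx.2.2) * Polynomial.X) =
        fun idx : Fin n × Fin n × Fin n => delta idx.1 idx.2.1 idx.2.2 * t := by
      funext idx
      simp
    rw [h1, h2] at h
    simp only [Polynomial.coe_evalRingHom] at h
    rw [hqdef]
    exact h.trans (MvPolynomial.eval₂_id p)
  have hq0 : q = 0 := by
    apply Polynomial.eq_zero_of_infinite_isRoot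
    apply Set.Infinite.mono (s := {t : F | t ≠ 0})
    · intro t ht
      have hmem := scalar_mem_orbit hn delta hdelta t ht
      have h5 := hp _ hmem
      show Polynomial.IsRoot q t
      rw [Polynomial.IsRoot.def, heval t]
      exact h5
    · exact Set.Finite.infinite_compl (Set.finite_singleton 0)
  have := heval 0
  rw [hq0] at this
  simp only [Polynomial.eval_zero] at this
  rw [show (fun _ : Fin n × Fin n × Fin n => (0 : F)) =
    (fun idx : Fin n × Fin n × Fin n => delta idx.1 idx.2.1 idx.2.2 * 0) by funext idx; ring]
  exact this.symm

/-- over an infinite field, `n ≥ 2`, the Zariski closure of the orbit of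
the structure vector `δ_n` (only nonzero entry `δ_{112} = 1`) is `O(δ_n) ∪ {0}`: the
only proper degeneration of `d_n` is to the abelian algebra. -/
theorem dn_orbit_closure {F : Type*} [Field F] [Infinite F] {n : ℕ} (hn : 2 ≤ n)
    (delta : Fin n → Fin n → Fin n → F)
    (hdelta : ∀ i j k : Fin n,
      delta i j k =
        if i = (⟨0, by omega⟩ : Fin n) ∧ j = (⟨0, by omega⟩ : Fin n) ∧
            k = (⟨1, by omega⟩ : Fin n) then 1
        else 0) :
    zClosure (orbitSV delta) = orbitSV delta ∪ {0} := by
  apply Set.Subset.antisymm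
  · intro mu hmu
    by_cases hzero : mu = 0
    · right; exact hzero
    left
    -- extract the polynomial identities
    have h1 : ∀ a b c a' b' c' : Fin n,
        mu a b c * mu a' b' c' = mu a b c' * mu a' b' c := by
      intro a b c a' b' c'
      have hv := hmu (MvPolynomial.X (a,b,c) * MvPolynomial.X (a',b',c')
        - MvPolynomial.X (a,b,c') * MvPolynomial.X (a',b',c)) ?_
      · simp only [map_sub, map_mul, MvPolynomial.eval_X] at hv
        exact sub_eq_zero.mp hv
      · intro lam hlam
        obtain ⟨u, w, -, h⟩ := orbit_tensor hn delta hdelta lam hlam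
        simp only [map_sub, map_mul, MvPolynomial.eval_X]
        simp only [h]
        ring
    have h2 : ∀ a b a' b' c : Fin n,
        mu a b c * mu a' b' c = mu a b' c * mu a' b c := by
      intro a b a' b' c
      have hv := hmu (MvPolynomial.X (a,b,c) * MvPolynomial.X (a',b',c)
        - MvPolynomial.X (a,b',c) * MvPolynomial.X (a',b,c)) ?_
      · simp only [map_sub, map_mul, MvPolynomial.eval_X] at hv
        exact sub_eq_zero.mp hv
      · intro lam hlam
        obtain ⟨u, w, -, h⟩ := orbit_tensor hn delta hdelta lam hlam
        simp only [map_sub, map_mul, MvPolynomial.eval_X]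
        simp only [h]
        ring
    have h3 : ∀ a b c : Fin n, mu a b c = mu b a c := by
      intro a b c
      have hv := hmu (MvPolynomial.X (a,b,c) - MvPolynomial.X (b,a,c)) ?_
      · simp only [map_sub, MvPolynomial.eval_X] at hv
        exact sub_eq_zero.mp hv
      · intro lam hlam
        obtain ⟨u, w, -, h⟩ := orbit_tensor hn delta hdelta lam hlam
        simp only [map_sub, MvPolynomial.eval_X]
        simp only [h]
        ring
    have h4 : ∀ a : Fin n, ∑ k, mu a k k = 0 := by
      intro a
      have hv := hmu (∑ k, MvPolynomial.X (a,k,k)) ?_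
      · simpa only [map_sum, MvPolynomial.eval_X] using hv
      · intro lam hlam
        obtain ⟨u, w, huw, h⟩ := orbit_tensor hn delta hdelta lam hlam
        simp only [map_sum, MvPolynomial.eval_X]
        have : ∑ k, lam a k k = u a * ∑ k, u k * w k := by
          rw [Finset.mul_sum]
          exact Finset.sum_congr rfl fun k _ => by rw [h]; ring
        rw [this, huw, mul_zero]
    -- find a nonzero entry
    obtain ⟨a₀, ha⟩ := Function.ne_iff.mp hzero
    obtain ⟨b₀, hb⟩ := Function.ne_iff.mp ha
    obtain ⟨c₀, hm'⟩ := Function.ne_iff.mp hb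
    have hm : mu a₀ b₀ c₀ ≠ 0 := hm'
    have hm3 : mu a₀ b₀ c₀ * mu a₀ b₀ c₀ * mu a₀ b₀ c₀ ≠ 0 :=
      mul_ne_zero (mul_ne_zero hm hm) hm
    have hinv : (mu a₀ b₀ c₀ * mu a₀ b₀ c₀ * mu a₀ b₀ c₀)⁻¹ *
        (mu a₀ b₀ c₀ * mu a₀ b₀ c₀ * mu a₀ b₀ c₀) = 1 := inv_mul_cancel₀ hm3
    have key9 : ∀ a b c, mu a b c * (mu a₀ b₀ c₀ * mu a₀ b₀ c₀ * mu a₀ b₀ c₀) =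
        mu a b₀ c₀ * mu b b₀ c₀ * (mu a₀ a₀ c₀ * mu a₀ b₀ c) := by
      intro a b c
      have K1 : mu a b c * (mu a₀ b₀ c₀ * mu a₀ b₀ c₀) =
          mu a b₀ c₀ * mu a₀ b c₀ * mu a₀ b₀ c := by
        linear_combination mu a₀ b₀ c₀ * (h1 a b c a₀ b₀ c₀) + mu a₀ b₀ c * (h2 a b a₀ b₀ c₀)
      have K2 : mu a₀ b₀ c₀ * mu a₀ b c₀ = mu b b₀ c₀ * mu a₀ a₀ c₀ := by
        linear_combination mu a₀ b₀ c₀ * (h3 a₀ b c₀) + h2 b a₀ a₀ b₀ c₀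
      linear_combination mu a₀ b₀ c₀ * K1 + (mu a b₀ c₀ * mu a₀ b₀ c) * K2
    have key3 : ∀ a b c, mu a b c = mu a b₀ c₀ * mu b b₀ c₀ *
        (mu a₀ a₀ c₀ * mu a₀ b₀ c *
          (mu a₀ b₀ c₀ * mu a₀ b₀ c₀ * mu a₀ b₀ c₀)⁻¹) := by
      intro a b c
      linear_combination (mu a₀ b₀ c₀ * mu a₀ b₀ c₀ * mu a₀ b₀ c₀)⁻¹ * key9 a b c
        - mu a b c * hinv
    have hU : (fun x => mu x b₀ c₀) ≠ (0 : Fin n → F) := by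
      intro h0
      exact hm (congrFun h0 a₀)
    have hW : (fun c => mu a₀ a₀ c₀ * mu a₀ b₀ c *
        (mu a₀ b₀ c₀ * mu a₀ b₀ c₀ * mu a₀ b₀ c₀)⁻¹) ≠ (0 : Fin n → F) := by
      intro h0
      apply hm
      rw [key3 a₀ b₀ c₀, congrFun h0 c₀, Pi.zero_apply, mul_zero]
    have hsum : ∑ k, (mu k b₀ c₀) * (mu a₀ a₀ c₀ * mu a₀ b₀ k *
        (mu a₀ b₀ c₀ * mu a₀ b₀ c₀ * mu a₀ b₀ c₀)⁻¹) = 0 := by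
      have h0 := h4 a₀
      have e : ∑ k, mu a₀ k k = mu a₀ b₀ c₀ * ∑ k, mu k b₀ c₀ *
          (mu a₀ a₀ c₀ * mu a₀ b₀ k *
            (mu a₀ b₀ c₀ * mu a₀ b₀ c₀ * mu a₀ b₀ c₀)⁻¹) := by
        rw [Finset.mul_sum]
        refine Finset.sum_congr rfl fun k _ => ?_
        rw [key3 a₀ k k]
        ring
      rw [e] at h0
      exact (mul_eq_zero.mp h0).resolve_left hm
    have hform : mu = fun a b c => mu a b₀ c₀ * mu b b₀ c₀ *
        (mu a₀ a₀ c₀ * mu a₀ b₀ c *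
          (mu a₀ b₀ c₀ * mu a₀ b₀ c₀ * mu a₀ b₀ c₀)⁻¹) :=
      funext fun a => funext fun b => funext fun c => key3 a b c
    rw [hform]
    exact tensor_mem_orbit hn delta hdelta (fun x => mu x b₀ c₀)
      (fun c => mu a₀ a₀ c₀ * mu a₀ b₀ c *
        (mu a₀ b₀ c₀ * mu a₀ b₀ c₀ * mu a₀ b₀ c₀)⁻¹) hU hW hsum
  · intro mu hmu
    rcases hmu with hmu | hmu
    · intro p hp; exact hp mu hmu
    · rw [Set.mem_singleton_iff] at hmu
      subst hmu
      intro p hp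
      simpa using zero_eval hn delta hdelta p hp
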